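/- Let J be a group, let n ≥ 5, and let X = J × Fin n with J acting by left multiplication on the first coordinate. Then the Rubik group Rub_J(X) is perfect, i.e., it equals its own commutator subgroup. -/

import Mathlib

/-- The subgroup `Sym_J(X)` of permutations of `X = J × Fin n` commuting with the left
multiplication action of `J` on the first coordinate. -/
def EquivariantPerm (J : Type*) [Group J] (n : ℕ) : Subgroup (Equiv.Perm (J × Fin n)) where
  carrier := {σ | ∀ (j : J) (x : J × Fin n), σ (j * x.1, x.2) = (j * (σ x).1, (σ x).2)}
  one_mem' := by intro j x; rfl
  mul_mem' := by
    intro σ τ hσ hτ j x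
    simp only [Equiv.Perm.mul_apply]
    rw [hτ, hσ]
  inv_mem' := by
    intro σ hσ j x
    apply σ.injective
    rw [hσ]
    simp

/-- The Rubik group `Rub_J(X)`: the commutator subgroup of `Sym_J(X)`, regarded as a
subgroup of the symmetric group of `X = J × Fin n`. -/
def RubikGroup (J : Type*) [Group J] (n : ℕ) : Subgroup (Equiv.Perm (J × Fin n)) :=
  ⁅EquivariantPerm J n, EquivariantPerm J n⁆

open scoped commutatorElement

namespace RubikAux

open Equiv Subgroup

variable {J : Type*} [Group J] {n : ℕ}

/-- The "base" permutation `(j, k) ↦ (j * (f k)⁻¹, k)`, as a `MonoidHom` in `f`. -/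
def baseE (f : Fin n → J) : Equiv.Perm (J × Fin n) where
  toFun x := (x.1 * (f x.2)⁻¹, x.2)
  invFun x := (x.1 * f x.2, x.2)
  left_inv x := by simp
  right_inv x := by simp

def baseHom (J : Type*) [Group J] (n : ℕ) : (Fin n → J) →* Equiv.Perm (J × Fin n) :=
  MonoidHom.mk' baseE (by
    intro f g
    ext x
    · simp [baseE, mul_assoc]
    · rfl)

@[simp] lemma baseHom_apply (f : Fin n → J) (x : J × Fin n) :
    baseHom J n f x = (x.1 * (f x.2)⁻¹, x.2) := rfl

/-- The "lift" permutation `(j, k) ↦ (j, π k)`, as a `MonoidHom` in `π`. -/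
def liftHom (J : Type*) [Group J] (n : ℕ) : Equiv.Perm (Fin n) →* Equiv.Perm (J × Fin n) :=
  MonoidHom.mk' (fun π => Equiv.prodCongr (Equiv.refl J) π) (by
    intro a b
    ext x
    · rfl
    · rfl)

@[simp] lemma liftHom_apply (π : Equiv.Perm (Fin n)) (x : J × Fin n) :
    liftHom J n π x = (x.1, π x.2) := rfl

lemma mem_equivariant_iff {σ : Equiv.Perm (J × Fin n)} :
    σ ∈ EquivariantPerm J n ↔
      ∀ (j : J) (x : J × Fin n), σ (j * x.1, x.2) = (j * (σ x).1, (σ x).2) := Iff.rfl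

lemma baseHom_mem (f : Fin n → J) : baseHom J n f ∈ EquivariantPerm J n := by
  intro j x
  simp [mul_assoc]

lemma liftHom_mem (π : Equiv.Perm (Fin n)) : liftHom J n π ∈ EquivariantPerm J n := by
  intro j x
  simp

/-- Commutator of a base element and a lifted permutation. -/
lemma comm_base_lift (f : Fin n → J) (ρ : Equiv.Perm (Fin n)) :
    ⁅baseHom J n f, liftHom J n ρ⁆ = baseHom J n (fun k => f k * (f (ρ⁻¹ k))⁻¹) := by
  have h1 : (baseHom J n f)⁻¹ = baseHom J n f⁻¹ := by rw [← map_inv]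
  have h2 : (liftHom J n ρ)⁻¹ = liftHom J n ρ⁻¹ := by rw [← map_inv]
  rw [commutatorElement_def, h1, h2]
  ext x
  · simp only [Equiv.Perm.mul_apply, baseHom_apply, liftHom_apply, Pi.inv_apply, inv_inv,
      Equiv.Perm.inv_def, Equiv.apply_symm_apply, mul_inv_rev, mul_assoc]
  · simp only [Equiv.Perm.mul_apply, baseHom_apply, liftHom_apply,
      Equiv.Perm.inv_def, Equiv.apply_symm_apply]

/-- Conjugation of a base element by a lifted permutation. -/
lemma conj_lift_base (π : Equiv.Perm (Fin n)) (f : Fin n → J) :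
    liftHom J n π * baseHom J n f * (liftHom J n π)⁻¹ =
      baseHom J n (fun k => f (π⁻¹ k)) := by
  have h2 : (liftHom J n π)⁻¹ = liftHom J n π⁻¹ := by rw [← map_inv]
  rw [h2]
  ext x
  · simp only [Equiv.Perm.mul_apply, baseHom_apply, liftHom_apply]
  · simp only [Equiv.Perm.mul_apply, baseHom_apply, liftHom_apply,
      Equiv.Perm.inv_def, Equiv.apply_symm_apply]

/-- Every equivariant permutation factors as a lift times a base element. -/
lemma exists_decomp {x : Equiv.Perm (J × Fin n)} (hx : x ∈ EquivariantPerm J n) :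
    ∃ (π : Equiv.Perm (Fin n)) (f : Fin n → J), x = liftHom J n π * baseHom J n f := by
  have hxi : x⁻¹ ∈ EquivariantPerm J n := (EquivariantPerm J n).inv_mem hx
  have key : ∀ (y : Equiv.Perm (J × Fin n)), y ∈ EquivariantPerm J n →
      ∀ (j : J) (k : Fin n), y (j, k) = (j * (y (1, k)).1, (y (1, k)).2) := by
    intro y hy j k
    have := hy j (1, k)
    simpa using this
  have hxi' := mem_equivariant_iff.mp hxi
  have hx' := mem_equivariant_iff.mp hx
  refine ⟨⟨fun k => (x (1, k)).2, fun k => (x⁻¹ (1, k)).2, ?_, ?_⟩,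
    fun k => ((x (1, k)).1)⁻¹, ?_⟩
  · intro k
    show (x⁻¹ ((1 : J), (x ((1 : J), k)).2)).2 = k
    have h2 := hxi' ((x (1, k)).1)⁻¹ (x (1, k))
    rw [show ((1 : J), (x ((1 : J), k)).2) = (((x (1,k)).1)⁻¹ * (x (1,k)).1, (x (1,k)).2)
      by simp, h2]
    simp
  · intro k
    show (x ((1 : J), (x⁻¹ ((1 : J), k)).2)).2 = k
    have h2 := hx' ((x⁻¹ (1, k)).1)⁻¹ (x⁻¹ (1, k))
    rw [show ((1 : J), (x⁻¹ ((1 : J), k)).2) = (((x⁻¹ (1,k)).1)⁻¹ * (x⁻¹ (1,k)).1, (x⁻¹ (1,k)).2)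
      by simp, h2]
    simp
  · ext ⟨j, k⟩
    · simp only [Equiv.Perm.mul_apply, baseHom_apply, liftHom_apply, inv_inv]
      exact congrArg Prod.fst (key x hx j k)
    · simp only [Equiv.Perm.mul_apply, baseHom_apply, liftHom_apply]
      rw [key x hx j k]
      rfl

/-- The alternating group on `≥ 5` letters is perfect. -/
lemma alt_comm_eq {α : Type*} [Fintype α] [DecidableEq α] (h5 : 5 ≤ Fintype.card α) :
    ⁅alternatingGroup α, alternatingGroup α⁆ = alternatingGroup α := by
  apply le_antisymm
  · exact Subgroup.commutator_le.mpr fun a ha b hb =>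
      mul_mem (mul_mem (mul_mem ha hb) (inv_mem ha)) (inv_mem hb)
  · refine le_trans (le_of_eq Equiv.Perm.closure_three_cycles_eq_alternating.symm)
      ((Subgroup.closure_le _).mpr ?_)
    intro σ hσ
    have hσA : σ ∈ alternatingGroup α := Equiv.Perm.mem_alternatingGroup.2 hσ.sign
    have hσ2 : σ * σ ∈ alternatingGroup α := mul_mem hσA hσA
    have hconj := alternatingGroup.isThreeCycle_isConj (by simpa [Nat.card_eq_fintype_card] using h5) (σ := ⟨σ, hσA⟩)
      (τ := ⟨σ * σ, hσ2⟩) hσ hσ.isThreeCycle_sq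
    obtain ⟨c, hc⟩ := hconj
    have humem : ((c : ↥(alternatingGroup α)) : Equiv.Perm α) ∈ alternatingGroup α :=
      (c : ↥(alternatingGroup α)).2
    have heq : ((c : ↥(alternatingGroup α)) : Equiv.Perm α) * σ =
        (σ * σ) * ((c : ↥(alternatingGroup α)) : Equiv.Perm α) :=
      congrArg Subtype.val hc.eq
    have hc' : ((c : ↥(alternatingGroup α)) : Equiv.Perm α) * σ *
        ((c : ↥(alternatingGroup α)) : Equiv.Perm α)⁻¹ = σ * σ := by
      rw [heq]; group
    have hfin : ⁅((c : ↥(alternatingGroup α)) : Equiv.Perm α), σ⁆ = σ := by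
      rw [commutatorElement_def, hc']
      group
    rw [← hfin]
    exact Subgroup.commutator_mem_commutator humem hσA

/-- Abstract lemma: if modulo `K` (normal in `H`) the subgroup `H` is generated by a set of
pairwise commuting elements, then all commutators of `H` lie in `K`. -/
lemma abstract_comm {G : Type*} [Group G] (H K : Subgroup G) (S : Set G)
    (hKH : K ≤ H) (hSH : S ⊆ ↑H)
    (hconj : ∀ w ∈ H, ∀ k ∈ K, w * k * w⁻¹ ∈ K)
    (hcomm : ∀ s ∈ S, ∀ t ∈ S, ⁅s, t⁆ ∈ K)
    (hgen : ∀ x ∈ H, x ∈ Subgroup.closure S ⊔ K)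
    {a b : G} (ha : a ∈ H) (hb : b ∈ H) : ⁅a, b⁆ ∈ K := by
  classical
  let K' : Subgroup ↥H := K.subgroupOf H
  haveI hN : K'.Normal := by
    constructor
    rintro ⟨k, hkH⟩ hk ⟨w, hwH⟩
    simp only [K', Subgroup.mem_subgroupOf] at hk ⊢
    exact hconj w hwH k hk
  let T : Set (↥H ⧸ K') := (QuotientGroup.mk' K') '' {z : ↥H | (z : G) ∈ S}
  have hSK_le : Subgroup.closure (S ∪ ↑K) ≤ H := by
    apply (Subgroup.closure_le _).mpr
    exact Set.union_subset hSH (fun x hx => hKH hx)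
  have key : ∀ x : ↥H, (QuotientGroup.mk' K') x ∈ Subgroup.closure T := by
    intro x
    have hx : (x : G) ∈ Subgroup.closure (S ∪ ↑K) := by
      rw [Subgroup.closure_union, Subgroup.closure_eq]
      exact hgen x x.2
    refine Subgroup.closure_induction
      (p := fun g _ => ∀ hgH : g ∈ H, (QuotientGroup.mk' K') ⟨g, hgH⟩ ∈ Subgroup.closure T)
      ?_ ?_ ?_ ?_ hx x.2
    · intro g hg hgH
      rcases hg with hgS | hgK
      · exact Subgroup.subset_closure ⟨⟨g, hgH⟩, hgS, rfl⟩
      · have : ((⟨g, hgH⟩ : ↥H) : G) ∈ K := hgK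
        have h1 : (QuotientGroup.mk' K') ⟨g, hgH⟩ = 1 :=
          (QuotientGroup.eq_one_iff _).mpr (Subgroup.mem_subgroupOf.mpr this)
        rw [h1]; exact one_mem _
    · intro h1
      have : (⟨(1 : G), h1⟩ : ↥H) = 1 := rfl
      rw [this, map_one]; exact one_mem _
    · intro g₁ g₂ hg₁ hg₂ ih₁ ih₂ hH
      have h1 : g₁ ∈ H := hSK_le hg₁
      have h2 : g₂ ∈ H := hSK_le hg₂
      have : (⟨g₁ * g₂, hH⟩ : ↥H) = ⟨g₁, h1⟩ * ⟨g₂, h2⟩ := rfl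
      rw [this, map_mul]
      exact mul_mem (ih₁ h1) (ih₂ h2)
    · intro g hg ih hH
      have h1 : g ∈ H := hSK_le hg
      have : (⟨g⁻¹, hH⟩ : ↥H) = (⟨g, h1⟩ : ↥H)⁻¹ := rfl
      rw [this, map_inv]
      exact inv_mem (ih h1)
  have pair : ∀ q ∈ T, ∀ r ∈ T, Commute q r := by
    rintro _ ⟨z, hz, rfl⟩ _ ⟨w, hw, rfl⟩
    rw [← commutatorElement_eq_one_iff_commute, ← map_commutatorElement]
    apply (QuotientGroup.eq_one_iff _).mpr
    apply Subgroup.mem_subgroupOf.mpr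
    have : ((⁅z, w⁆ : ↥H) : G) = ⁅(z : G), (w : G)⁆ := rfl
    rw [this]
    exact hcomm _ hz _ hw
  have comm_all : ∀ q ∈ Subgroup.closure T, ∀ r ∈ Subgroup.closure T, Commute q r := by
    intro q hq r hr
    refine Subgroup.closure_induction₂ (fun x y hx hy => pair x hx y hy)
      (fun x _ => Commute.one_left x) (fun x _ => Commute.one_right x)
      ?_ ?_ ?_ ?_ hq hr
    · intro x y z _ _ _ h1 h2; exact h1.mul_left h2
    · intro x y z _ _ _ h1 h2; exact h1.mul_right h2
    · intro x y _ _ h; exact h.inv_left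
    · intro x y _ _ h; exact h.inv_right
  have hcom : Commute ((QuotientGroup.mk' K') ⟨a, ha⟩) ((QuotientGroup.mk' K') ⟨b, hb⟩) :=
    comm_all _ (key _) _ (key _)
  have h1 : (QuotientGroup.mk' K') ⁅(⟨a, ha⟩ : ↥H), ⟨b, hb⟩⁆ = 1 := by
    rw [map_commutatorElement]
    exact commutatorElement_eq_one_iff_commute.mpr hcom
  have h2 : (⁅(⟨a, ha⟩ : ↥H), (⟨b, hb⟩ : ↥H)⁆) ∈ K' := (QuotientGroup.eq_one_iff _).mp h1
  have h3 : ((⁅(⟨a, ha⟩ : ↥H), (⟨b, hb⟩ : ↥H)⁆ : ↥H) : G) = ⁅a, b⁆ := rfl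
  have := Subgroup.mem_subgroupOf.mp h2
  rwa [h3] at this

lemma R_le_W : RubikGroup J n ≤ EquivariantPerm J n :=
  Subgroup.commutator_le.mpr fun a ha b hb =>
    mul_mem (mul_mem (mul_mem ha hb) (inv_mem ha)) (inv_mem hb)

lemma K_le_R : ⁅RubikGroup J n, RubikGroup J n⁆ ≤ RubikGroup J n :=
  Subgroup.commutator_le.mpr fun a ha b hb =>
    mul_mem (mul_mem (mul_mem ha hb) (inv_mem ha)) (inv_mem hb)

lemma lift_alt_le_K (hn : 5 ≤ n) :
    (alternatingGroup (Fin n)).map (liftHom J n) ≤ ⁅RubikGroup J n, RubikGroup J n⁆ := by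
  have hcard : 5 ≤ Fintype.card (Fin n) := by simpa using hn
  have hA := alt_comm_eq hcard
  have hLW : (alternatingGroup (Fin n)).map (liftHom J n) ≤ EquivariantPerm J n := by
    rintro _ ⟨π, hπ, rfl⟩; exact liftHom_mem π
  have hLL : ⁅(alternatingGroup (Fin n)).map (liftHom J n),
      (alternatingGroup (Fin n)).map (liftHom J n)⁆ = (alternatingGroup (Fin n)).map (liftHom J n) := by
    rw [← Subgroup.map_commutator, hA]
  have hLR : (alternatingGroup (Fin n)).map (liftHom J n) ≤ RubikGroup J n := by
    rw [← hLL]; exact Subgroup.commutator_mono hLW hLW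
  rw [← hLL]; exact Subgroup.commutator_mono hLR hLR

lemma conj_mem_K {w k : Equiv.Perm (J × Fin n)} (hw : w ∈ EquivariantPerm J n)
    (hk : k ∈ ⁅RubikGroup J n, RubikGroup J n⁆) :
    w * k * w⁻¹ ∈ ⁅RubikGroup J n, RubikGroup J n⁆ := by
  let φ : Equiv.Perm (J × Fin n) →* Equiv.Perm (J × Fin n) := (MulAut.conj w).toMonoidHom
  have hφ : ∀ x, φ x = w * x * w⁻¹ := fun x => rfl
  have hmap : (EquivariantPerm J n).map φ = EquivariantPerm J n := by
    apply le_antisymm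
    · rintro _ ⟨x, hx, rfl⟩
      rw [hφ]
      exact mul_mem (mul_mem hw hx) (inv_mem hw)
    · intro x hx
      refine ⟨w⁻¹ * x * w, mul_mem (mul_mem (inv_mem hw) hx) hw, ?_⟩
      rw [hφ]; group
  have hmapR : (RubikGroup J n).map φ = RubikGroup J n := by
    show (⁅EquivariantPerm J n, EquivariantPerm J n⁆).map φ = RubikGroup J n
    rw [Subgroup.map_commutator, hmap]; rfl
  have hmapK : (⁅RubikGroup J n, RubikGroup J n⁆).map φ = ⁅RubikGroup J n, RubikGroup J n⁆ := by
    rw [Subgroup.map_commutator, hmapR]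
  rw [← hmapK]
  exact ⟨k, hk, rfl⟩

lemma d_mem_K (hn : 5 ≤ n) (i i' : Fin n) (g : J) :
    baseHom J n (Pi.mulSingle i g * (Pi.mulSingle i' g)⁻¹) ∈
      ⁅RubikGroup J n, RubikGroup J n⁆ := by
  by_cases hii : i = i'
  · subst hii
    rw [mul_inv_cancel, map_one]
    exact one_mem _
  have h5 : (5 : ℕ) ≤ n := hn
  set k0 : Fin n := ⟨0, by omega⟩ with hk0
  set k1 : Fin n := ⟨1, by omega⟩ with hk1
  set k2 : Fin n := ⟨2, by omega⟩ with hk2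
  set k3 : Fin n := ⟨3, by omega⟩ with hk3
  -- step a: d(k0, k2, g) is in the Rubik group
  have he : ⁅baseHom J n (Pi.mulSingle k0 g), liftHom J n (Equiv.swap k0 k2)⁆
      = baseHom J n (Pi.mulSingle k0 g * (Pi.mulSingle k2 g)⁻¹) := by
    rw [comm_base_lift]
    congr 1
    funext k
    simp only [Pi.mul_apply, Pi.inv_apply, Pi.mulSingle_apply, Equiv.swap_inv,
      Equiv.swap_apply_def]
    split_ifs <;> simp_all (config := {decide := false}) [Fin.ext_iff] <;> omega
  have heR : baseHom J n (Pi.mulSingle k0 g * (Pi.mulSingle k2 g)⁻¹) ∈ RubikGroup J n := by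
    rw [← he]
    exact Subgroup.commutator_mem_commutator (baseHom_mem _) (liftHom_mem _)
  -- the even permutation ρ₂ = (k0 k3)(k0 k1)
  have h01 : k0 ≠ k1 := by simp [hk0, hk1, Fin.ext_iff]
  have h03 : k0 ≠ k3 := by simp [hk0, hk3, Fin.ext_iff]
  have hρ₂ : Equiv.swap k0 k3 * Equiv.swap k0 k1 ∈ alternatingGroup (Fin n) := by
    rw [Equiv.Perm.mem_alternatingGroup, map_mul, Equiv.Perm.sign_swap h03,
      Equiv.Perm.sign_swap h01]
    simp
  have hliftρ₂K : liftHom J n (Equiv.swap k0 k3 * Equiv.swap k0 k1) ∈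
      ⁅RubikGroup J n, RubikGroup J n⁆ :=
    lift_alt_le_K hn ⟨_, hρ₂, rfl⟩
  -- step b: d(k0, k1, g) is in K
  have hd01 : ⁅baseHom J n (Pi.mulSingle k0 g * (Pi.mulSingle k2 g)⁻¹),
        liftHom J n (Equiv.swap k0 k3 * Equiv.swap k0 k1)⁆
      = baseHom J n (Pi.mulSingle k0 g * (Pi.mulSingle k1 g)⁻¹) := by
    rw [comm_base_lift]
    congr 1
    funext k
    simp only [Pi.mul_apply, Pi.inv_apply, Pi.mulSingle_apply, mul_inv_rev, Equiv.swap_inv,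
      Equiv.Perm.mul_apply, Equiv.swap_apply_def]
    split_ifs <;> simp_all (config := {decide := false}) [Fin.ext_iff] <;> omega
  have hd01K : baseHom J n (Pi.mulSingle k0 g * (Pi.mulSingle k1 g)⁻¹) ∈
      ⁅RubikGroup J n, RubikGroup J n⁆ := by
    rw [← hd01]
    exact Subgroup.commutator_mem_commutator heR (K_le_R hliftρ₂K)
  -- step c: conjugate to move (k0, k1) to (i, i')
  obtain ⟨π, hπ0, hπ1⟩ : ∃ π : Equiv.Perm (Fin n), π k0 = i ∧ π k1 = i' := by
    refine ⟨Equiv.swap (Equiv.swap k0 i k1) i' * Equiv.swap k0 i, ?_, ?_⟩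
    · have hne1 : Equiv.swap k0 i k1 ≠ i := by
        by_cases hi1 : i = k1
        · rw [hi1, Equiv.swap_apply_right]
          exact h01
        · rw [Equiv.swap_apply_of_ne_of_ne (Ne.symm h01) (fun hc => hi1 (hc.symm))]
          exact fun hc => hi1 hc.symm
      simp only [Equiv.Perm.mul_apply, Equiv.swap_apply_left]
      exact Equiv.swap_apply_of_ne_of_ne (Ne.symm hne1) hii
    · simp only [Equiv.Perm.mul_apply, Equiv.swap_apply_left]
  have hconj : liftHom J n π * baseHom J n (Pi.mulSingle k0 g * (Pi.mulSingle k1 g)⁻¹) *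
        (liftHom J n π)⁻¹
      = baseHom J n (Pi.mulSingle i g * (Pi.mulSingle i' g)⁻¹) := by
    rw [conj_lift_base]
    congr 1
    funext k
    have e0 : (π⁻¹ k = k0) = (k = i) := by
      rw [Equiv.Perm.inv_eq_iff_eq, hπ0, eq_comm]
    have e1 : (π⁻¹ k = k1) = (k = i') := by
      rw [Equiv.Perm.inv_eq_iff_eq, hπ1, eq_comm]
    simp only [Pi.mul_apply, Pi.inv_apply, Pi.mulSingle_apply, e0, e1]
  rw [← hconj]
  exact conj_mem_K (liftHom_mem π) hd01K

lemma c_mem_K (hn : 5 ≤ n) (x y : J) :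
    baseHom J n (Pi.mulSingle (⟨0, by omega⟩ : Fin n) ⁅x, y⁆) ∈
      ⁅RubikGroup J n, RubikGroup J n⁆ := by
  set k0 : Fin n := ⟨0, by omega⟩ with hk0
  set k1 : Fin n := ⟨1, by omega⟩ with hk1
  set k2 : Fin n := ⟨2, by omega⟩ with hk2
  have h1 := d_mem_K hn k0 k1 x
  have h2 := d_mem_K hn k0 k2 y
  have hc : ⁅baseHom J n (Pi.mulSingle k0 x * (Pi.mulSingle k1 x)⁻¹),
      baseHom J n (Pi.mulSingle k0 y * (Pi.mulSingle k2 y)⁻¹)⁆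
      = baseHom J n (Pi.mulSingle k0 ⁅x, y⁆) := by
    rw [← map_commutatorElement]
    congr 1
    funext k
    simp only [commutatorElement_def, Pi.mul_apply, Pi.inv_apply, Pi.mulSingle_apply]
    split_ifs <;>
      first
        | (exfalso; simp_all (config := {decide := false}) [Fin.ext_iff] <;> omega)
        | group
  rw [← hc]
  exact Subgroup.commutator_mem_commutator (K_le_R h1) (K_le_R h2)

end RubikAux



/-- for `n ≥ 5`, the Rubik group `Rub_J(J × Fin n)` is perfect: it equals
its own commutator subgroup. -/
theorem stmt_11 {J : Type*} [Group J] {n : ℕ} (hn : 5 ≤ n) :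
    ⁅RubikGroup J n, RubikGroup J n⁆ = RubikGroup J n := by
  open RubikAux in
  apply le_antisymm K_le_R
  show RubikGroup J n ≤ ⁅RubikGroup J n, RubikGroup J n⁆
  have main : ∀ a ∈ EquivariantPerm J n, ∀ b ∈ EquivariantPerm J n,
      ⁅a, b⁆ ∈ ⁅RubikGroup J n, RubikGroup J n⁆ := by
    intro a ha b hb
    set k0 : Fin n := ⟨0, by omega⟩ with hk0
    set k1 : Fin n := ⟨1, by omega⟩ with hk1
    have h01 : k0 ≠ k1 := by simp [hk0, hk1, Fin.ext_iff]
    set S : Set (Equiv.Perm (J × Fin n)) :=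
      (Set.range fun g : J => RubikAux.baseHom J n (Pi.mulSingle k0 g)) ∪
        {RubikAux.liftHom J n (Equiv.swap k0 k1)} with hS
    refine RubikAux.abstract_comm (EquivariantPerm J n)
      (⁅RubikGroup J n, RubikGroup J n⁆) S
      (le_trans RubikAux.K_le_R RubikAux.R_le_W) ?_ ?_ ?_ ?_ ha hb
    · -- S ⊆ W
      rintro s (⟨g, rfl⟩ | rfl)
      · exact RubikAux.baseHom_mem _
      · exact RubikAux.liftHom_mem _
    · -- conjugation stability
      intro w hw k hk
      exact RubikAux.conj_mem_K hw hk
    · -- pairwise commutators in K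
      have hbase_t : ∀ g : J,
          ⁅RubikAux.baseHom J n (Pi.mulSingle k0 g),
            RubikAux.liftHom J n (Equiv.swap k0 k1)⁆ ∈
            ⁅RubikGroup J n, RubikGroup J n⁆ := by
        intro g
        have heq : ⁅RubikAux.baseHom J n (Pi.mulSingle k0 g),
            RubikAux.liftHom J n (Equiv.swap k0 k1)⁆
            = RubikAux.baseHom J n (Pi.mulSingle k0 g * (Pi.mulSingle k1 g)⁻¹) := by
          rw [RubikAux.comm_base_lift]
          congr 1
          funext k
          simp only [Pi.mul_apply, Pi.inv_apply, Pi.mulSingle_apply, Equiv.swap_inv,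
            Equiv.swap_apply_def]
          split_ifs <;> simp_all (config := {decide := false}) [Fin.ext_iff] <;> omega
        rw [heq]
        exact RubikAux.d_mem_K hn k0 k1 g
      rintro s (⟨g, rfl⟩ | hs_t) t (⟨h, rfl⟩ | ht_t)
      · -- base/base
        have heq : ⁅RubikAux.baseHom J n (Pi.mulSingle k0 g),
            RubikAux.baseHom J n (Pi.mulSingle k0 h)⁆
            = RubikAux.baseHom J n (Pi.mulSingle k0 ⁅g, h⁆) := by
          rw [← map_commutatorElement]
          congr 1
          funext k
          simp only [commutatorElement_def, Pi.mul_apply, Pi.inv_apply, Pi.mulSingle_apply]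
          split_ifs <;> group
        rw [heq]
        exact RubikAux.c_mem_K hn g h
      · rw [Set.mem_singleton_iff] at ht_t
        rw [ht_t]
        exact hbase_t g
      · rw [Set.mem_singleton_iff] at hs_t
        rw [hs_t, ← commutatorElement_inv]
        exact inv_mem (hbase_t h)
      · rw [Set.mem_singleton_iff] at hs_t ht_t
        rw [hs_t, ht_t]
        have : ⁅RubikAux.liftHom J n (Equiv.swap k0 k1),
            RubikAux.liftHom J n (Equiv.swap k0 k1)⁆ = 1 := by
          rw [commutatorElement_def]; group
        rw [this]
        exact one_mem _
    · -- generation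
      intro x hx
      obtain ⟨π, f, rfl⟩ := RubikAux.exists_decomp hx
      have hlift_in : ∀ ρ : Equiv.Perm (Fin n),
          RubikAux.liftHom J n ρ ∈ Subgroup.closure S ⊔ ⁅RubikGroup J n, RubikGroup J n⁆ := by
        intro ρ
        by_cases hsgn : Equiv.Perm.sign ρ = 1
        · exact (le_sup_right : _ ≤ Subgroup.closure S ⊔ ⁅RubikGroup J n, RubikGroup J n⁆)
            (RubikAux.lift_alt_le_K hn ⟨ρ, Equiv.Perm.mem_alternatingGroup.mpr hsgn, rfl⟩)
        · have hρ : ρ = Equiv.swap k0 k1 * (Equiv.swap k0 k1 * ρ) := by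
            rw [← mul_assoc, Equiv.swap_mul_self, one_mul]
          have hsgn2 : Equiv.Perm.sign (Equiv.swap k0 k1 * ρ) = 1 := by
            rcases Int.units_eq_one_or (Equiv.Perm.sign ρ) with h | h
            · exact absurd h hsgn
            · rw [map_mul, Equiv.Perm.sign_swap h01, h]
              decide
          rw [hρ, map_mul]
          exact mul_mem ((le_sup_left : Subgroup.closure S ≤ _) (Subgroup.subset_closure (Or.inr rfl)))
            ((le_sup_right : _ ≤ Subgroup.closure S ⊔ ⁅RubikGroup J n, RubikGroup J n⁆) (RubikAux.lift_alt_le_K hn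
              ⟨_, Equiv.Perm.mem_alternatingGroup.mpr hsgn2, rfl⟩))
      have hbase_in : ∀ f : Fin n → J,
          RubikAux.baseHom J n f ∈ Subgroup.closure S ⊔ ⁅RubikGroup J n, RubikGroup J n⁆ := by
        have hlist : ∀ (l : List (Fin n)) (f : Fin n → J), (∀ i, i ∉ l → f i = 1) →
            RubikAux.baseHom J n f ∈
              Subgroup.closure S ⊔ ⁅RubikGroup J n, RubikGroup J n⁆ := by
          intro l
          induction l with
          | nil =>
            intro f hf
            have hfone : f = 1 := funext fun i => hf i (by simp)
            rw [hfone, map_one]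
            exact one_mem _
          | cons i l ih =>
            intro f hf
            have hsplit : f = Pi.mulSingle i (f i) * Function.update f i 1 := by
              funext k
              by_cases hk : k = i
              · subst hk; simp
              · simp [Pi.mulSingle_apply, Function.update_apply, hk]
            rw [hsplit, map_mul]
            refine mul_mem ?_ (ih _ ?_)
            · by_cases hi0 : i = k0
              · subst hi0
                exact (le_sup_left : Subgroup.closure S ≤ _)
                  (Subgroup.subset_closure (Or.inl ⟨f k0, rfl⟩))
              · have hstep : RubikAux.baseHom J n (Pi.mulSingle i (f i)) =
                    RubikAux.baseHom J n (Pi.mulSingle i (f i) * (Pi.mulSingle k0 (f i))⁻¹) *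
                      RubikAux.baseHom J n (Pi.mulSingle k0 (f i)) := by
                  rw [← map_mul, inv_mul_cancel_right]
                rw [hstep]
                exact mul_mem ((le_sup_right : _ ≤ Subgroup.closure S ⊔ ⁅RubikGroup J n, RubikGroup J n⁆) (RubikAux.d_mem_K hn i k0 (f i)))
                  ((le_sup_left : Subgroup.closure S ≤ _) (Subgroup.subset_closure (Or.inl ⟨f i, rfl⟩)))
            · intro j hj
              by_cases hji : j = i
              · subst hji; simp
              · rw [Function.update_apply, if_neg hji]
                refine hf j ?_
                intro hmem
                rcases List.mem_cons.mp hmem with h | h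
                · exact hji h
                · exact hj h
        exact fun f => hlist (List.finRange n) f fun i hi =>
          absurd (List.mem_finRange i) hi
      exact mul_mem (hlift_in π) (hbase_in f)
  exact Subgroup.commutator_le.mpr main
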